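/- Let p be prime and f, g ∈ F_p[X] monic. The linearized polynomial L_f divides L_g (as a polynomial) if and only if f divides g in F_p[X]. -/

import Mathlib

/-- The linearized polynomial associated to `f`: replace `X^i` by `X^(p^i)`. -/
noncomputable def linearized (p : ℕ) (f : Polynomial (ZMod p)) : Polynomial (ZMod p) :=
  ∑ i ∈ Finset.range (f.natDegree + 1), Polynomial.C (f.coeff i) * Polynomial.X ^ (p ^ i)

section Aux

open Polynomial Finset

variable (p : ℕ) [Fact p.Prime]

/-- `linearized` with a flexible cutoff. -/
noncomputable def linAux (N : ℕ) (f : Polynomial (ZMod p)) : Polynomial (ZMod p) :=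
  ∑ i ∈ Finset.range N, Polynomial.C (f.coeff i) * Polynomial.X ^ (p ^ i)

lemma linearized_eq_linAux (f : Polynomial (ZMod p)) {N : ℕ} (hN : f.natDegree < N) :
    linearized p f = linAux p N f := by
  unfold linearized linAux
  refine Finset.sum_subset (Finset.range_subset_range.2 hN) ?_
  intro i _ hni
  simp only [Finset.mem_range, not_lt] at hni
  rw [f.coeff_eq_zero_of_natDegree_lt (by omega), map_zero, zero_mul]

lemma hp2 : 2 ≤ p := (Fact.out (p := p.Prime)).two_le

lemma linAux_coeff_pow (N j : ℕ) (f : Polynomial (ZMod p)) (hj : j < N) :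
    (linAux p N f).coeff (p ^ j) = f.coeff j := by
  unfold linAux
  rw [finset_sum_coeff, Finset.sum_eq_single j]
  · simp [coeff_X_pow]
  · intro i _ hij
    have hne : p ^ j ≠ p ^ i := fun h =>
      hij (Nat.pow_right_injective (hp2 p) h.symm)
    simp [coeff_X_pow, hne]
  · intro h; exact absurd (Finset.mem_range.2 hj) h

lemma linearized_coeff_pow (j : ℕ) (f : Polynomial (ZMod p)) (hj : j ≤ f.natDegree) :
    (linearized p f).coeff (p ^ j) = f.coeff j := by
  rw [linearized_eq_linAux p f (Nat.lt_succ_self _)]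
  exact linAux_coeff_pow p _ j f (by omega)

lemma linearized_add (a b : Polynomial (ZMod p)) :
    linearized p (a + b) = linearized p a + linearized p b := by
  set N := max ((a + b).natDegree) (max a.natDegree b.natDegree) + 1 with hN
  rw [linearized_eq_linAux p (a+b) (N := N) (by omega),
    linearized_eq_linAux p a (N := N) (by omega),
    linearized_eq_linAux p b (N := N) (by omega)]
  unfold linAux
  rw [← Finset.sum_add_distrib]
  refine Finset.sum_congr rfl fun i _ => ?_
  rw [coeff_add, map_add, add_mul]

lemma linearized_zero : linearized p 0 = 0 := by simp [linearized]

lemma linearized_natDegree_le (f : Polynomial (ZMod p)) :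
    (linearized p f).natDegree ≤ p ^ f.natDegree := by
  refine natDegree_sum_le_of_forall_le _ _ fun i hi => ?_
  refine (natDegree_C_mul_le _ _).trans ?_
  simp only [natDegree_X_pow]
  exact Nat.pow_le_pow_right (by have := hp2 p; omega) (by
    simp only [Finset.mem_range] at hi; omega)

lemma linearized_monic {f : Polynomial (ZMod p)} (hf : f.Monic) :
    (linearized p f).Monic := by
  refine monic_of_natDegree_le_of_coeff_eq_one _ (linearized_natDegree_le p f) ?_
  rw [linearized_coeff_pow p _ f le_rfl]
  exact hf

lemma linearized_ne_zero {f : Polynomial (ZMod p)} (hf : f ≠ 0) :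
    linearized p f ≠ 0 := by
  intro h
  have := linearized_coeff_pow p f.natDegree f le_rfl
  rw [h, coeff_zero] at this
  exact hf (leadingCoeff_eq_zero.mp this.symm)

lemma linearized_natDegree_eq {f : Polynomial (ZMod p)} (hf : f ≠ 0) :
    (linearized p f).natDegree = p ^ f.natDegree := by
  refine le_antisymm (linearized_natDegree_le p f) ?_
  refine le_natDegree_of_ne_zero ?_
  rw [linearized_coeff_pow p _ f le_rfl]
  exact fun h => hf (leadingCoeff_eq_zero.mp h)

lemma linAux_pow_pow (N k : ℕ) (f : Polynomial (ZMod p)) :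
    linAux p N f ^ (p ^ k) = ∑ j ∈ Finset.range N, C (f.coeff j) * X ^ (p ^ (j + k)) := by
  induction k with
  | zero => simp [linAux]
  | succ k ih =>
    have hchar : CharP (Polynomial (ZMod p)) p := by infer_instance
    rw [pow_succ, pow_mul, ih, sum_pow_char]
    refine Finset.sum_congr rfl fun j _ => ?_
    rw [mul_pow, ← map_pow, ZMod.pow_card, ← pow_mul, ← pow_succ, ← Nat.add_assoc]

lemma linAux_monomial_mul (k N : ℕ) (c : ZMod p) (b : Polynomial (ZMod p)) :
    linAux p (k + N) (Polynomial.C c * Polynomial.X ^ k * b) =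
      ∑ j ∈ Finset.range N, C (c * b.coeff j) * X ^ (p ^ (k + j)) := by
  unfold linAux
  have hco : ∀ i : ℕ, (C c * X ^ k * b).coeff i =
      if k ≤ i then c * b.coeff (i - k) else 0 := by
    intro i
    have : C c * X ^ k * b = (C c * b) * X ^ k := by ring
    rw [this, coeff_mul_X_pow', coeff_C_mul]
  rw [Finset.range_eq_Ico, ← Finset.sum_Ico_consecutive _ (Nat.zero_le k) (Nat.le_add_right k N)]
  have h1 : ∑ i ∈ Finset.Ico 0 k, C ((C c * X ^ k * b).coeff i) * X ^ (p ^ i) = 0 := by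
    refine Finset.sum_eq_zero fun i hi => ?_
    simp only [Finset.mem_Ico] at hi
    rw [hco i, if_neg (by omega), map_zero, zero_mul]
  rw [h1, zero_add, Finset.sum_Ico_eq_sum_range]
  simp only [Nat.add_sub_cancel_left]
  refine Finset.sum_congr rfl fun j _ => ?_
  rw [hco (k + j), if_pos (Nat.le_add_right k j), Nat.add_sub_cancel_left]

lemma linearized_mul (a b : Polynomial (ZMod p)) :
    linearized p (a * b) = (linearized p a).comp (linearized p b) := by
  induction a using Polynomial.induction_on' with
  | add u v hu hv =>
    rw [add_mul, linearized_add, linearized_add, hu, hv, add_comp]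
  | monomial k c =>
    by_cases hc : c = 0
    · simp [hc, linearized_zero p]
    · have hmon : (Polynomial.monomial k c : Polynomial (ZMod p)) = C c * X ^ k :=
        (C_mul_X_pow_eq_monomial).symm
      have hdeg : (Polynomial.monomial k c * b).natDegree < k + (b.natDegree + 1) := by
        refine lt_of_le_of_lt (natDegree_mul_le) ?_
        have : (Polynomial.monomial k c).natDegree ≤ k := natDegree_monomial_le c
        omega
      rw [linearized_eq_linAux p _ hdeg, hmon, linAux_monomial_mul]
      have hLmon : linearized p (C c * X ^ k) = C c * X ^ (p ^ k) := by
        have hd : (C c * X ^ k).natDegree = k := by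
          rw [natDegree_C_mul_X_pow k c hc]
        unfold linearized
        rw [hd]
        rw [Finset.sum_range_succ]
        have hz : ∑ i ∈ Finset.range k, C ((C c * X ^ k).coeff i) * X ^ (p ^ i) = 0 := by
          refine Finset.sum_eq_zero fun i hi => ?_
          simp only [Finset.mem_range] at hi
          rw [coeff_C_mul, coeff_X_pow, if_neg (by omega)]
          simp
        rw [hz, zero_add, coeff_C_mul, coeff_X_pow, if_pos rfl, mul_one]
      rw [hLmon, mul_comp, C_comp, X_pow_comp]
      have hb : linearized p b = linAux p (b.natDegree + 1) b :=
        linearized_eq_linAux p b (Nat.lt_succ_self _)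
      rw [hb, linAux_pow_pow, Finset.mul_sum]
      refine Finset.sum_congr rfl fun j _ => ?_
      rw [← mul_assoc, ← map_mul, Nat.add_comm j k]

lemma X_dvd_linearized (f : Polynomial (ZMod p)) : Polynomial.X ∣ linearized p f := by
  refine Finset.dvd_sum fun i _ => ?_
  exact Dvd.dvd.mul_left (dvd_pow_self X (Nat.pos_of_ne_zero (by
    have := hp2 p
    positivity)).ne') _

lemma dvd_comp_of_X_dvd {a b : Polynomial (ZMod p)} (h : Polynomial.X ∣ a) :
    b ∣ a.comp b := by
  obtain ⟨s, rfl⟩ := h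
  rw [mul_comp, X_comp]
  exact dvd_mul_right _ _

lemma linearized_dvd_of_dvd {f g : Polynomial (ZMod p)} (h : f ∣ g) :
    linearized p f ∣ linearized p g := by
  obtain ⟨c, rfl⟩ := h
  rw [mul_comm, linearized_mul]
  exact dvd_comp_of_X_dvd p (X_dvd_linearized p c)

end Aux

theorem stmt_2 (p : ℕ) [Fact p.Prime] (f g : Polynomial (ZMod p))
    (hf : f.Monic) (hg : g.Monic) :
    linearized p f ∣ linearized p g ↔ f ∣ g := by
  open Polynomial in
  constructor
  · intro h
    have hfne : f ≠ 0 := hf.ne_zero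
    set r := g %ₘ f with hr
    have hsum : r + f * (g /ₘ f) = g := modByMonic_add_div g f
    have hdvd2 : linearized p f ∣ linearized p (f * (g /ₘ f)) := by
      rw [mul_comm, linearized_mul]
      exact dvd_comp_of_X_dvd p (X_dvd_linearized p _)
    have hkey : linearized p f ∣ linearized p r := by
      have heq : linearized p r = linearized p g - linearized p (f * (g /ₘ f)) := by
        rw [eq_sub_iff_add_eq, ← linearized_add, hsum]
      rw [heq]
      exact dvd_sub h hdvd2
    by_contra hndvd
    have hrne : r ≠ 0 := by
      intro h0
      exact hndvd ((modByMonic_eq_zero_iff_dvd hf).mp h0)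
    have hLr : linearized p r ≠ 0 := linearized_ne_zero p hrne
    have h1 : (linearized p f).natDegree ≤ (linearized p r).natDegree :=
      natDegree_le_of_dvd hkey hLr
    have h2 : r.natDegree < f.natDegree :=
      natDegree_lt_natDegree hrne (degree_modByMonic_lt g hf)
    have h3 : (linearized p r).natDegree < (linearized p f).natDegree := by
      rw [linearized_natDegree_eq p hfne]
      refine lt_of_le_of_lt (linearized_natDegree_le p r) ?_
      exact Nat.pow_lt_pow_right (hp2 p) h2
    omega
  · exact linearized_dvd_of_dvd p
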